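/- Let R be a finite set with |R| ≥ 2, (p_x)_{x∈R} probability weights on I, (J_{xy}) a symmetric family of reals, δ > 0, σ = max_{s∈I}|s|, and let ξ_t(R) = Σ_{s_R∈I^R} Σ_{g∈G_R} Σ_{S⊂R} Π_{{x,y}∈E_g}(e^{J_{xy}s_xs_y}−1) Π_{x∈S}(e^{its_x}−1) Π_{x∈R} p_x(s_x). Then for every t with 0 < t ≤ δ, |dξ_t(R)/dt| ≤ σ |R| w_0(R), where w_0(R) = (1+δσ)^{|R|} Σ_{s_R∈I^R} Π_{x∈R} p_x(s_x) · |Σ_{g∈G_R} Π_{{x,y}∈E_g}(e^{J_{xy}s_xs_y}−1)|. -/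

import Mathlib

open Finset
open scoped Classical

namespace SpinLCLT

/-- The set of connected simple graphs on a finite vertex type `W`. -/
noncomputable def connGraphs (W : Type*) [Fintype W] : Finset (SimpleGraph W) :=
  Finset.univ.filter (fun g => g.Connected)

/-- The product over the edges `{x,y}` of a graph `g` of the Mayer factors
`e^{J_{xy} f(x) f(y)} − 1`. -/
noncomputable def edgeProd {W : Type*} [Fintype W] [DecidableEq W]
    (J : W → W → ℝ) (hJ : ∀ x y, J x y = J y x) (f : W → ℝ)
    (g : SimpleGraph W) : ℂ :=
  ∏ e ∈ g.edgeFinset,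
    Sym2.lift ⟨fun x y => Complex.exp ((J x y * f x * f y : ℝ) : ℂ) - 1,
      fun x y => by dsimp only; rw [hJ x y, mul_right_comm]⟩ e

/-- The polymer activity `ξ_t(R)`:
`ξ_t({x}) = Σ_{s∈I}(e^{its}−1)p_x(s)` and, for `|R| ≥ 2`,
`ξ_t(R) = Σ_{s_R∈I^R} Σ_{g∈G_R} Σ_{S⊆R} Π_{{x,y}∈E_g}(e^{J_{xy}s_xs_y}−1)
Π_{x∈S}(e^{its_x}−1) Π_{x∈R} p_x(s_x)`, where `I = Finset.Icc a b`. -/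
noncomputable def xi (a b : ℤ) {V : Type*} [DecidableEq V] (p : V → ℤ → ℝ)
    (J : V → V → ℝ) (hJ : ∀ x y, J x y = J y x) (R : Finset V) (t : ℝ) : ℂ :=
  if R.card = 1 then
    ∑ x ∈ R, ∑ z ∈ Finset.Icc a b,
      (Complex.exp (Complex.I * t * z) - 1) * (p x z : ℂ)
  else
    ∑ s ∈ Fintype.piFinset (fun _ : ↥R => Finset.Icc a b),
      ∑ g ∈ connGraphs ↥R,
        ∑ S ∈ (Finset.univ : Finset ↥R).powerset,
          (edgeProd (fun x y : ↥R => J ↑x ↑y) (fun x y => hJ ↑x ↑y)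
              (fun x : ↥R => (s x : ℝ)) g) *
            (∏ x ∈ S, (Complex.exp (Complex.I * t * (s x : ℤ)) - 1)) *
            (∏ x : ↥R, (p ↑x (s x) : ℂ))

/-- The weight `w₀(R)`: `w₀({x}) = δσ` and, for `|R| ≥ 2`,
`w₀(R) = (1+δσ)^{|R|} Σ_{s_R∈I^R} Π_{x∈R} p_x(s_x) ·
|Σ_{g∈G_R} Π_{{x,y}∈E_g}(e^{J_{xy}s_xs_y}−1)|`. -/
noncomputable def w0 (a b : ℤ) {V : Type*} [DecidableEq V] (δ σ : ℝ)
    (p : V → ℤ → ℝ) (J : V → V → ℝ) (hJ : ∀ x y, J x y = J y x)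
    (R : Finset V) : ℝ :=
  if R.card = 1 then δ * σ
  else (1 + δ * σ) ^ R.card *
    ∑ s ∈ Fintype.piFinset (fun _ : ↥R => Finset.Icc a b),
      (∏ x : ↥R, p ↑x (s x)) *
        ‖∑ g ∈ connGraphs ↥R,
          edgeProd (fun x y : ↥R => J ↑x ↑y) (fun x y => hJ ↑x ↑y)
            (fun x : ↥R => (s x : ℝ)) g‖


/-- For `R` with `|R| ≥ 2`, probability weights `(p_x)`,
symmetric `(J_{xy})`, `δ > 0`, `σ = max_{s∈I}|s|`: for `0 < t ≤ δ`,
`|dξ_t(R)/dt| ≤ σ |R| w₀(R)`. -/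
theorem xi_first_derivative_bound
    (a b : ℤ) (hab : a < b) {V : Type*} [DecidableEq V]
    (p : V → ℤ → ℝ)
    (hp0 : ∀ x, ∀ z ∈ Finset.Icc a b, 0 ≤ p x z)
    (hp1 : ∀ x, ∑ z ∈ Finset.Icc a b, p x z = 1)
    (J : V → V → ℝ) (hJ : ∀ x y, J x y = J y x)
    (δ σ : ℝ) (hδ : 0 < δ) (hσ : σ = max |(a : ℝ)| |(b : ℝ)|)
    (R : Finset V) (hR : 2 ≤ R.card)
    (t : ℝ) (ht0 : 0 < t) (htδ : t ≤ δ) :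
    ‖deriv (xi a b p J hJ R) t‖ ≤
      σ * (R.card : ℝ) * w0 a b δ σ p J hJ R := by
  classical
  have hcard : R.card ≠ 1 := by omega
  set Is : Finset ℤ := Finset.Icc a b with hIs
  set A : (↥R → ℤ) → ℂ := fun s => ∑ g ∈ connGraphs ↥R,
      edgeProd (fun x y : ↥R => J ↑x ↑y) (fun x y => hJ ↑x ↑y)
        (fun x : ↥R => (s x : ℝ)) g with hA
  set P : (↥R → ℤ) → ℝ := fun s => ∏ x : ↥R, p ↑x (s x) with hP
  set Z : (↥R → ℤ) → ℝ := fun s => ∑ x : ↥R, ((s x : ℤ) : ℝ) with hZ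
  -- σ is nonnegative
  have hσ0 : 0 ≤ σ := by rw [hσ]; exact le_trans (abs_nonneg _) (le_max_left _ _)
  -- rewriting xi as a sum of exponentials
  have hxi : xi a b p J hJ R = fun u : ℝ =>
      ∑ s ∈ Fintype.piFinset (fun _ : ↥R => Is),
        A s * Complex.exp (Complex.I * u * ((Z s : ℝ) : ℂ)) * ((P s : ℝ) : ℂ) := by
    funext u
    rw [xi, if_neg hcard]
    refine Finset.sum_congr rfl fun s hs => ?_
    have hF : ∑ S ∈ (Finset.univ : Finset ↥R).powerset,
        ∏ x ∈ S, (Complex.exp (Complex.I * u * (s x : ℤ)) - 1)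
        = Complex.exp (Complex.I * u * ((Z s : ℝ) : ℂ)) := by
      have h1 := Finset.prod_add
        (fun x : ↥R => Complex.exp (Complex.I * u * ((s x : ℤ) : ℂ)) - 1)
        (fun _ : ↥R => (1 : ℂ)) Finset.univ
      simp only [Finset.prod_const_one, mul_one, sub_add_cancel] at h1
      rw [← h1, ← Complex.exp_sum]
      congr 1
      rw [← Finset.mul_sum]
      congr 1
      push_cast [hZ]
      ring
    have hPc : (∏ x : ↥R, (p ↑x (s x) : ℂ)) = ((P s : ℝ) : ℂ) := by
      rw [hP]; push_cast; ring
    calc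
      ∑ g ∈ connGraphs ↥R, ∑ S ∈ (Finset.univ : Finset ↥R).powerset,
          (edgeProd (fun x y : ↥R => J ↑x ↑y) (fun x y => hJ ↑x ↑y)
              (fun x : ↥R => (s x : ℝ)) g) *
            (∏ x ∈ S, (Complex.exp (Complex.I * u * (s x : ℤ)) - 1)) *
            (∏ x : ↥R, (p ↑x (s x) : ℂ))
        = ∑ g ∈ connGraphs ↥R,
            (edgeProd (fun x y : ↥R => J ↑x ↑y) (fun x y => hJ ↑x ↑y)
              (fun x : ↥R => (s x : ℝ)) g) *
            (∑ S ∈ (Finset.univ : Finset ↥R).powerset,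
              ∏ x ∈ S, (Complex.exp (Complex.I * u * (s x : ℤ)) - 1)) *
            (∏ x : ↥R, (p ↑x (s x) : ℂ)) := by
          refine Finset.sum_congr rfl fun g _ => ?_
          rw [Finset.mul_sum, Finset.sum_mul]
      _ = A s * Complex.exp (Complex.I * u * ((Z s : ℝ) : ℂ)) * ((P s : ℝ) : ℂ) := by
          rw [← Finset.sum_mul, ← Finset.sum_mul, hF, hPc, hA]
  -- the derivative
  have hder : HasDerivAt (xi a b p J hJ R)
      (∑ s ∈ Fintype.piFinset (fun _ : ↥R => Is),
        A s * (Complex.exp (Complex.I * t * ((Z s : ℝ) : ℂ)) *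
          (Complex.I * ((Z s : ℝ) : ℂ))) * ((P s : ℝ) : ℂ)) t := by
    rw [hxi]
    refine HasDerivAt.fun_sum fun s _ => ?_
    have h0 : HasDerivAt (fun u : ℝ => Complex.I * (u : ℂ) * ((Z s : ℝ) : ℂ))
        (Complex.I * ((Z s : ℝ) : ℂ)) t := by
      simpa using (((hasDerivAt_id t).ofReal_comp.const_mul Complex.I).mul_const
        (((Z s : ℝ) : ℂ)))
    exact (h0.cexp.const_mul (A s)).mul_const _
  rw [hder.deriv]
  -- bound the derivative
  have hbound : ∀ s ∈ Fintype.piFinset (fun _ : ↥R => Is),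
      ‖A s * (Complex.exp (Complex.I * t * ((Z s : ℝ) : ℂ)) *
          (Complex.I * ((Z s : ℝ) : ℂ))) * ((P s : ℝ) : ℂ)‖
      ≤ (σ * R.card) * (P s * ‖A s‖) := by
    intro s hs
    have hmem : ∀ x : ↥R, s x ∈ Is := fun x => (Fintype.mem_piFinset.mp hs) x
    have hPnn : 0 ≤ P s := Finset.prod_nonneg fun x _ => hp0 _ _ (hmem x)
    have hZle : |Z s| ≤ (R.card : ℝ) * σ := by
      calc |Z s| ≤ ∑ x : ↥R, |((s x : ℤ) : ℝ)| := Finset.abs_sum_le_sum_abs _ _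
        _ ≤ ∑ _x : ↥R, σ := by
            refine Finset.sum_le_sum fun x _ => ?_
            have hx := hmem x
            rw [hIs, Finset.mem_Icc] at hx
            rw [hσ]
            exact abs_le_max_abs_abs (by exact_mod_cast hx.1) (by exact_mod_cast hx.2)
        _ = (R.card : ℝ) * σ := by
            rw [Finset.sum_const, nsmul_eq_mul]
            simp
    have habsexp : ‖Complex.exp (Complex.I * t * ((Z s : ℝ) : ℂ))‖ = 1 := by
      rw [Complex.norm_exp]
      simp [Complex.exp_re, Complex.mul_re, Complex.mul_im]
    rw [norm_mul, norm_mul, norm_mul, norm_mul, habsexp, Complex.norm_I, Complex.norm_real,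
      Real.norm_eq_abs, Complex.norm_real, Real.norm_eq_abs, abs_of_nonneg hPnn]
    calc ‖A s‖ * (1 * (1 * |Z s|)) * P s
        = ‖A s‖ * |Z s| * P s := by ring
      _ ≤ ‖A s‖ * ((R.card : ℝ) * σ) * P s := by
          refine mul_le_mul_of_nonneg_right (mul_le_mul_of_nonneg_left hZle
            (norm_nonneg _)) hPnn
      _ = (σ * R.card) * (P s * ‖A s‖) := by ring
  have h1 : ‖∑ s ∈ Fintype.piFinset (fun _ : ↥R => Is),
        A s * (Complex.exp (Complex.I * t * ((Z s : ℝ) : ℂ)) *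
          (Complex.I * ((Z s : ℝ) : ℂ))) * ((P s : ℝ) : ℂ)‖
      ≤ ∑ s ∈ Fintype.piFinset (fun _ : ↥R => Is),
        (σ * R.card) * (P s * ‖A s‖) :=
    le_trans (norm_sum_le _ _) (Finset.sum_le_sum hbound)
  refine le_trans h1 ?_
  rw [w0, if_neg hcard, ← Finset.mul_sum]
  have hsum_nn : 0 ≤ ∑ s ∈ Fintype.piFinset (fun _ : ↥R => Is),
      P s * ‖A s‖ := by
    refine Finset.sum_nonneg fun s hs => ?_
    have hmem : ∀ x : ↥R, s x ∈ Is := fun x => (Fintype.mem_piFinset.mp hs) x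
    exact mul_nonneg (Finset.prod_nonneg fun x _ => hp0 _ _ (hmem x)) (norm_nonneg _)
  have hpow : (1 : ℝ) ≤ (1 + δ * σ) ^ R.card :=
    one_le_pow₀ (by nlinarith)
  calc (σ * R.card) * ∑ s ∈ Fintype.piFinset (fun _ : ↥R => Is), P s * ‖A s‖
      ≤ (σ * R.card) * ((1 + δ * σ) ^ R.card *
          ∑ s ∈ Fintype.piFinset (fun _ : ↥R => Is), P s * ‖A s‖) := by
        refine mul_le_mul_of_nonneg_left ?_ (by positivity)
        nlinarith
    _ = σ * (R.card : ℝ) * ((1 + δ * σ) ^ R.card *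
          ∑ s ∈ Fintype.piFinset (fun _ : ↥R => Is), P s * ‖A s‖) := by ring


end SpinLCLT
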